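/- For i, j, k ∈ ℤ/4m, define turn_m(i,j,k) to hold iff i+j+k ∈ {-1,0,1} when both i and j are odd, and i+j+k = 0 otherwise. Then turn_m(i,j,k) holds if and only if there exist angles α ∈ [i]_m, β ∈ [j]_m, γ ∈ [k]_m with α+β+γ ≡ 0 (mod 2π). -/

import Mathlib

open Real Complex

/-- The OPRA_m sector `[i]_m` as a subset of the circle `ℝ/2πℤ` (`Real.Angle`):
an open arc if `i` is odd, a single point if `i` is even. -/
noncomputable def sector (m : ℕ) (i : ZMod (4*m)) : Set Real.Angle :=
  if Odd i.val then
    (fun r : ℝ => (r : Real.Angle)) ''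
      Set.Ioo (2*π*((i.val : ℝ)-1)/(4*m)) (2*π*((i.val : ℝ)+1)/(4*m))
  else {((2*π*(i.val : ℝ)/(4*m) : ℝ) : Real.Angle)}

/-- The direction angle `φ_XY` of the vector `Y - X`, as an element of the circle. -/
noncomputable def phiAngle (X Y : ℂ) : Real.Angle := (Complex.arg (Y - X) : Real.Angle)

/-- An o-point: a point of the plane (modeled as `ℂ`) with an orientation. -/
abbrev OPoint := ℂ × Real.Angle

/-- The distinct-position OPRA_m base relation `A ∠_i^j B`. -/
noncomputable def oprarel (m : ℕ) (i j : ZMod (4*m)) (A B : OPoint) : Prop :=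
  A.1 ≠ B.1 ∧ phiAngle A.1 B.1 - A.2 ∈ sector m i ∧ phiAngle B.1 A.1 - B.2 ∈ sector m j

/-- The same-position OPRA_m base relation `A ∠i B`. -/
noncomputable def oprasame (m : ℕ) (i : ZMod (4*m)) (A B : OPoint) : Prop :=
  A.1 = B.1 ∧ B.2 - A.2 ∈ sector m i

/-- `turn_m(i,j,k)`. -/
def turnRel (m : ℕ) (i j k : ZMod (4*m)) : Prop :=
  if Odd i.val ∧ Odd j.val then i + j + k = 0 ∨ i + j + k = 1 ∨ i + j + k = -1
  else i + j + k = 0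

/-- `sign_m(i)`. -/
def signm (m : ℕ) (i : ZMod (4*m)) : ℤ :=
  if i.val = 0 ∨ i.val = 2*m then 0 else if i.val < 2*m then 1 else -1

/-- `triangle_m(i,j,k)`. -/
def triRel (m : ℕ) (i j k : ZMod (4*m)) : Prop :=
  turnRel m i j (k - ((2*m : ℕ) : ZMod (4*m))) ∧
  ¬(i = ((2*m : ℕ) : ZMod (4*m)) ∧ j = ((2*m : ℕ) : ZMod (4*m)) ∧ k = ((2*m : ℕ) : ZMod (4*m))) ∧
  signm m i = signm m j ∧ signm m j = signm m k

/-- The sign of an angle, where both `0` and `π` get sign `0`. -/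
noncomputable def angsign (θ : Real.Angle) : ℤ := by
  classical exact if θ.toReal = 0 ∨ θ.toReal = π then 0 else if 0 < θ.toReal then 1 else -1

lemma coe_sum_eq_zero_iff (x y z : ℝ) :
    (x:Real.Angle)+(y:Real.Angle)+(z:Real.Angle) = 0 ↔ ∃ t : ℤ, x+y+z = 2*π*t := by
  rw [← Real.Angle.coe_add, ← Real.Angle.coe_add,
    show (0:Real.Angle) = ((0:ℝ):Real.Angle) from rfl,
    Real.Angle.angle_eq_iff_two_pi_dvd_sub]
  simp

lemma mem_sector_iff (m : ℕ) (i : ZMod (4*m)) (θ : Real.Angle) :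
    θ ∈ sector m i ↔ ∃ ε : ℝ,
      (Odd i.val → -(2*π/(4*(m:ℝ))) < ε ∧ ε < 2*π/(4*(m:ℝ))) ∧
      (¬ Odd i.val → ε = 0) ∧
      θ = ((2*π/(4*(m:ℝ)) * i.val + ε : ℝ) : Real.Angle) := by
  unfold sector
  by_cases h : Odd i.val
  · rw [if_pos h]
    constructor
    · rintro ⟨x, ⟨hx1, hx2⟩, rfl⟩
      have e1 : 2*π*((i.val:ℝ)-1)/(4*(m:ℝ)) = 2*π/(4*(m:ℝ))*i.val - 2*π/(4*(m:ℝ)) := by ring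
      have e2 : 2*π*((i.val:ℝ)+1)/(4*(m:ℝ)) = 2*π/(4*(m:ℝ))*i.val + 2*π/(4*(m:ℝ)) := by ring
      exact ⟨x - 2*π/(4*(m:ℝ)) * i.val, fun _ => ⟨by linarith, by linarith⟩,
        fun h' => absurd h h', by norm_num⟩
    · rintro ⟨ε, hε, -, rfl⟩
      obtain ⟨h1, h2⟩ := hε h
      have e1 : 2*π*((i.val:ℝ)-1)/(4*(m:ℝ)) = 2*π/(4*(m:ℝ))*i.val - 2*π/(4*(m:ℝ)) := by ring
      have e2 : 2*π*((i.val:ℝ)+1)/(4*(m:ℝ)) = 2*π/(4*(m:ℝ))*i.val + 2*π/(4*(m:ℝ)) := by ring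
      refine ⟨2*π/(4*(m:ℝ)) * i.val + ε, ⟨by linarith, by linarith⟩, rfl⟩
  · rw [if_neg h]
    simp only [Set.mem_singleton_iff]
    constructor
    · rintro rfl
      exact ⟨0, fun h' => absurd h' h, fun _ => rfl, by rw [add_zero]; congr 1; ring⟩
    · rintro ⟨ε, -, h0, rfl⟩
      rw [h0 h, add_zero]
      congr 1; ring

lemma zmod_sum_iff (m : ℕ) (hm : 1 ≤ m) (i j k : ZMod (4*m)) (c : ℤ) :
    i + j + k = (c : ZMod (4*m)) ↔ ∃ t : ℤ, (i.val : ℤ) + j.val + k.val = 4*m*t + c := by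
  haveI : NeZero (4*m) := ⟨by omega⟩
  conv_lhs => rw [← ZMod.natCast_zmod_val i, ← ZMod.natCast_zmod_val j, ← ZMod.natCast_zmod_val k]
  rw [show ((i.val : ZMod (4*m)) + (j.val : ZMod (4*m)) + (k.val : ZMod (4*m))
      = (((i.val : ℤ) + j.val + k.val : ℤ) : ZMod (4*m))) from by push_cast; ring,
    ZMod.intCast_eq_intCast_iff, Int.modEq_iff_dvd]
  constructor
  · rintro ⟨t, ht⟩
    exact ⟨-t, by push_cast at ht ⊢; linarith [ht]⟩
  · rintro ⟨t, ht⟩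
    exact ⟨-t, by push_cast; linarith [ht]⟩

/-- characterization of `turn_m`. -/
theorem stmt3 (m : ℕ) (hm : 1 ≤ m) (i j k : ZMod (4*m)) :
    turnRel m i j k ↔
      ∃ α ∈ sector m i, ∃ β ∈ sector m j, ∃ γ ∈ sector m k, α + β + γ = 0 := by
  have hmr : (0:ℝ) < (m:ℝ) := by exact_mod_cast hm
  have hu : 0 < 2*π/(4*(m:ℝ)) := by positivity
  set u : ℝ := 2*π/(4*(m:ℝ)) with hudef
  constructor
  · intro h
    have key : ∀ c : ℤ, (c = 0 ∨ ((c = 1 ∨ c = -1) ∧ Odd i.val ∧ Odd j.val)) →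
        i + j + k = (c : ZMod (4*m)) →
        ∃ α ∈ sector m i, ∃ β ∈ sector m j, ∃ γ ∈ sector m k, α + β + γ = 0 := by
      intro c hc hsum
      obtain ⟨t, ht⟩ := (zmod_sum_iff m hm i j k c).1 hsum
      have htr : (i.val:ℝ) + j.val + k.val = 4*m*t + c := by exact_mod_cast ht
      have h4 : (4*(m:ℝ)) ≠ 0 := by positivity
      refine ⟨_, (mem_sector_iff m i _).2 ⟨-(c*u/2), fun _ => ⟨?_, ?_⟩, fun hi => ?_, rfl⟩,
             _, (mem_sector_iff m j _).2 ⟨-(c*u/2), fun _ => ⟨?_, ?_⟩, fun hj => ?_, rfl⟩,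
             _, (mem_sector_iff m k _).2 ⟨0, fun _ => ⟨by linarith, by linarith⟩, fun _ => rfl, rfl⟩,
             ?_⟩
      · rcases hc with rfl | ⟨hc1, -⟩
        · push_cast; linarith
        · rcases hc1 with rfl | rfl <;> push_cast <;> linarith
      · rcases hc with rfl | ⟨hc1, -⟩
        · push_cast; linarith
        · rcases hc1 with rfl | rfl <;> push_cast <;> linarith
      · rcases hc with rfl | ⟨-, hoi, -⟩
        · simp
        · exact absurd hoi hi
      · rcases hc with rfl | ⟨hc1, -⟩
        · push_cast; linarith
        · rcases hc1 with rfl | rfl <;> push_cast <;> linarith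
      · rcases hc with rfl | ⟨hc1, -⟩
        · push_cast; linarith
        · rcases hc1 with rfl | rfl <;> push_cast <;> linarith
      · rcases hc with rfl | ⟨-, -, hoj⟩
        · simp
        · exact absurd hoj hj
      · rw [coe_sum_eq_zero_iff]
        refine ⟨t, ?_⟩
        have e2 : u * (4*(m:ℝ)*t) = 2*π*t := by rw [hudef]; field_simp
        linear_combination u * htr + e2
    unfold turnRel at h
    by_cases hij : Odd i.val ∧ Odd j.val
    · rw [if_pos hij] at h
      rcases h with h | h | h
      · exact key 0 (Or.inl rfl) (by simpa using h)
      · exact key 1 (Or.inr ⟨Or.inl rfl, hij⟩) (by simpa using h)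
      · exact key (-1) (Or.inr ⟨Or.inr rfl, hij⟩) (by push_cast; simpa using h)
    · rw [if_neg hij] at h
      exact key 0 (Or.inl rfl) (by simpa using h)
  · rintro ⟨α, hα, β, hβ, γ, hγ, hsum⟩
    obtain ⟨εi, hi1, hi2, rfl⟩ := (mem_sector_iff m i α).1 hα
    obtain ⟨εj, hj1, hj2, rfl⟩ := (mem_sector_iff m j β).1 hβ
    obtain ⟨εk, hk1, hk2, rfl⟩ := (mem_sector_iff m k γ).1 hγ
    rw [coe_sum_eq_zero_iff] at hsum
    obtain ⟨t, ht⟩ := hsum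
    set D : ℤ := 4*(m:ℤ)*t - ((i.val:ℤ) + j.val + k.val) with hDdef
    have hDr : (D:ℝ) = 4*(m:ℝ)*t - ((i.val:ℝ) + j.val + k.val) := by
      rw [hDdef]; push_cast; ring
    have h4 : (4*(m:ℝ)) ≠ 0 := by positivity
    have e2 : u * (4*(m:ℝ)*t) = 2*π*t := by rw [hudef]; field_simp
    have hE : εi + εj + εk = u * D := by
      linear_combination ht - e2 - u * hDr
    have hsumz : i + j + k = ((-D : ℤ) : ZMod (4*m)) := by
      rw [zmod_sum_iff m hm i j k (-D)]
      exact ⟨t, by rw [hDdef]; push_cast; ring⟩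
    have fi : (Odd i.val ∧ -u < εi ∧ εi < u) ∨ (¬ Odd i.val ∧ εi = 0) := by
      by_cases o : Odd i.val
      · exact Or.inl ⟨o, (hi1 o).1, (hi1 o).2⟩
      · exact Or.inr ⟨o, hi2 o⟩
    have fj : (Odd j.val ∧ -u < εj ∧ εj < u) ∨ (¬ Odd j.val ∧ εj = 0) := by
      by_cases o : Odd j.val
      · exact Or.inl ⟨o, (hj1 o).1, (hj1 o).2⟩
      · exact Or.inr ⟨o, hj2 o⟩
    have fk : (Odd k.val ∧ -u < εk ∧ εk < u) ∨ (¬ Odd k.val ∧ εk = 0) := by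
      by_cases o : Odd k.val
      · exact Or.inl ⟨o, (hk1 o).1, (hk1 o).2⟩
      · exact Or.inr ⟨o, hk2 o⟩
    have hclass : D = 0 ∨ ((D = 1 ∨ D = -1) ∧ Odd i.val ∧ Odd j.val) := by
      have hDbound : ∀ c : ℤ, -((c:ℝ)*u) < εi + εj + εk → εi + εj + εk < (c:ℝ)*u →
          -c < D ∧ D < c := by
        intro c hlo hhi
        rw [hE] at hlo hhi
        have h1 : (-c:ℝ) < (D:ℝ) := by nlinarith
        have h2 : ((D:ℝ)) < (c:ℝ) := by nlinarith
        exact ⟨by exact_mod_cast h1, by exact_mod_cast h2⟩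
      have hW : D = 4*((m:ℤ)*t) - ((i.val:ℤ) + j.val + k.val) := by rw [hDdef]; ring
      set W : ℤ := (m:ℤ)*t with hWdef
      rcases fi with ⟨oi, bi1, bi2⟩ | ⟨oi, ei⟩ <;>
        rcases fj with ⟨oj, bj1, bj2⟩ | ⟨oj, ej⟩ <;>
        rcases fk with ⟨ok, bk1, bk2⟩ | ⟨ok, ek⟩
      · -- all odd
        obtain ⟨a, ha⟩ := oi; obtain ⟨b, hb⟩ := oj; obtain ⟨cc, hc2⟩ := ok
        obtain ⟨l1, l2⟩ := hDbound 3 (by push_cast; linarith) (by push_cast; linarith)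
        refine Or.inr ⟨?_, ⟨a, ha⟩, ⟨b, hb⟩⟩
        omega
      · -- i j odd, k even
        obtain ⟨a, ha⟩ := oi; obtain ⟨b, hb⟩ := oj
        obtain ⟨e, he⟩ := Nat.not_odd_iff_even.mp ok
        obtain ⟨l1, l2⟩ := hDbound 2 (by push_cast; linarith [ek]) (by push_cast; linarith [ek])
        left; omega
      · -- i odd, j even, k odd
        obtain ⟨a, ha⟩ := oi; obtain ⟨cc, hc2⟩ := ok
        obtain ⟨e, he⟩ := Nat.not_odd_iff_even.mp oj
        obtain ⟨l1, l2⟩ := hDbound 2 (by push_cast; linarith [ej]) (by push_cast; linarith [ej])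
        left; omega
      · -- only i odd
        obtain ⟨l1, l2⟩ := hDbound 1 (by push_cast; linarith [ej, ek]) (by push_cast; linarith [ej, ek])
        left; omega
      · -- j odd, k odd
        obtain ⟨b, hb⟩ := oj; obtain ⟨cc, hc2⟩ := ok
        obtain ⟨e, he⟩ := Nat.not_odd_iff_even.mp oi
        obtain ⟨l1, l2⟩ := hDbound 2 (by push_cast; linarith [ei]) (by push_cast; linarith [ei])
        left; omega
      · -- only j odd
        obtain ⟨l1, l2⟩ := hDbound 1 (by push_cast; linarith [ei, ek]) (by push_cast; linarith [ei, ek])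
        left; omega
      · -- only k odd
        obtain ⟨l1, l2⟩ := hDbound 1 (by push_cast; linarith [ei, ej]) (by push_cast; linarith [ei, ej])
        left; omega
      · -- all even
        have hz : (D:ℝ) = 0 := by
          have h0 : u * (D:ℝ) = 0 := by rw [← hE, ei, ej, ek]; ring
          rcases mul_eq_zero.1 h0 with h' | h'
          · exact absurd h' (ne_of_gt hu)
          · exact h'
        left; exact_mod_cast hz
    unfold turnRel
    by_cases hij : Odd i.val ∧ Odd j.val
    · rw [if_pos hij]
      rcases hclass with h0 | ⟨hD1, -⟩
      · rw [h0] at hsumz; left; simpa using hsumz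
      · rcases hD1 with h1 | h1
        · rw [h1] at hsumz; right; right; rw [hsumz]; push_cast; ring
        · rw [h1] at hsumz; right; left; rw [hsumz]; push_cast; ring
    · rw [if_neg hij]
      rcases hclass with h0 | ⟨-, hoi, hoj⟩
      · rw [h0] at hsumz; simpa using hsumz
      · exact absurd ⟨hoi, hoj⟩ hij
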